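/- arXiv:1711.03768 — 7 statements merged into one kernel-verified Lean document; each statement's English description precedes it below -/
import Mathlib

section
/- Let ω be a positive integer and u : ℝ≥0 → X a bounded continuous S-asymptotically ω-periodic function with values in a Banach space X. Then the step function v(t) = u(⌊t⌋) is S-asymptotically ω-periodic in the Stepanov sense with exponent p ≥ 1, i.e., lim_{t→∞} ∫_t^{t+1} ‖v(s+ω) - v(s)‖^p ds = 0. -/
open Filter MeasureTheory

theorem stmt1 {X : Type*} [NormedAddCommGroup X] [NormedSpace ℝ X] [CompleteSpace X]
    (u : ℝ → X) (ω : ℕ) (hω : 1 ≤ ω) (p : ℝ) (hp : 1 ≤ p)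
    (hbdd : ∃ C : ℝ, ∀ t : ℝ, 0 ≤ t → ‖u t‖ ≤ C)
    (hcont : ContinuousOn u (Set.Ici (0 : ℝ)))
    (hsap : Tendsto (fun t : ℝ => u (t + (ω : ℝ)) - u t) atTop (nhds 0)) :
    Tendsto (fun t : ℝ =>
        ∫ s in t..(t + 1),
          ‖u ((⌊s + (ω : ℝ)⌋ : ℤ) : ℝ) - u ((⌊s⌋ : ℤ) : ℝ)‖ ^ p)
      atTop (nhds 0) := by
  rw [NormedAddCommGroup.tendsto_nhds_zero]
  intro ε hε
  set δ := min (ε / 2) 1 with hδdef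
  have hδpos : 0 < δ := lt_min (by linarith) one_pos
  have hδ1 : δ ≤ 1 := min_le_right _ _
  have h := (NormedAddCommGroup.tendsto_nhds_zero.mp hsap) δ hδpos
  rw [eventually_atTop] at h
  obtain ⟨T, hT⟩ := h
  filter_upwards [eventually_ge_atTop (T + 1)] with t ht
  have key : ∀ s ∈ Set.uIoc t (t + 1),
      ‖‖u ((⌊s + (ω : ℝ)⌋ : ℤ) : ℝ) - u ((⌊s⌋ : ℤ) : ℝ)‖ ^ p‖ ≤ ε / 2 := by
    intro s hs
    rw [Set.uIoc_of_le (by linarith : t ≤ t + 1)] at hs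
    have hsT : T ≤ ((⌊s⌋ : ℤ) : ℝ) := by
      have h1 : s - 1 < ((⌊s⌋ : ℤ) : ℝ) := Int.sub_one_lt_floor s
      have h2 : t < s := hs.1
      linarith
    have hd : ‖u (((⌊s⌋ : ℤ) : ℝ) + (ω : ℝ)) - u ((⌊s⌋ : ℤ) : ℝ)‖ < δ := hT _ hsT
    have hfl : ((⌊s + (ω : ℝ)⌋ : ℤ) : ℝ) = ((⌊s⌋ : ℤ) : ℝ) + (ω : ℝ) := by
      rw [Int.floor_add_natCast]; push_cast; ring
    rw [hfl]
    have h0 : (0 : ℝ) ≤ ‖u (((⌊s⌋ : ℤ) : ℝ) + (ω : ℝ)) - u ((⌊s⌋ : ℤ) : ℝ)‖ := norm_nonneg _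
    have hr1 : ‖u (((⌊s⌋ : ℤ) : ℝ) + (ω : ℝ)) - u ((⌊s⌋ : ℤ) : ℝ)‖ ^ p ≤ δ ^ p :=
      Real.rpow_le_rpow h0 hd.le (by linarith)
    have hr2 : δ ^ p ≤ δ ^ (1 : ℝ) := Real.rpow_le_rpow_of_exponent_ge hδpos hδ1 hp
    rw [Real.rpow_one] at hr2
    have hr3 : δ ≤ ε / 2 := min_le_left _ _
    rw [Real.norm_eq_abs, abs_of_nonneg (Real.rpow_nonneg h0 p)]
    linarith
  calc ‖∫ s in t..(t + 1), ‖u ((⌊s + (ω : ℝ)⌋ : ℤ) : ℝ) - u ((⌊s⌋ : ℤ) : ℝ)‖ ^ p‖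
      ≤ (ε / 2) * |t + 1 - t| := intervalIntegral.norm_integral_le_of_norm_le_const key
    _ < ε := by simp; linarith
end

section
/- Let ω be a positive integer, and let f : ℝ≥0 × X → X be uniformly S-asymptotically ω-periodic on bounded sets (i.e., for every bounded set K ⊂ X, {f(t,x) : t ≥ 0, x ∈ K} is bounded and f(t+ω,x) - f(t,x) → 0 as t → ∞ uniformly in x ∈ K) and satisfy a global Lipschitz condition ‖f(t,x) - f(t,y)‖ ≤ L‖x-y‖ for all t ≥ 0, x, y ∈ X. If u : ℝ≥0 → X is bounded continuous S-asymptotically ω-periodic, then lim_{t→∞} (f(t+ω, u(⌊t+ω⌋)) - f(t, u(⌊t⌋))) = 0. -/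
open Filter MeasureTheory

theorem stmt3 {X : Type*} [NormedAddCommGroup X] [NormedSpace ℝ X] [CompleteSpace X]
    (f : ℝ → X → X) (ω : ℕ) (hω : 1 ≤ ω) (L : ℝ) (hL : 0 < L)
    (husap : ∀ K : Set X, Bornology.IsBounded K →
      (∃ C : ℝ, ∀ t : ℝ, 0 ≤ t → ∀ x ∈ K, ‖f t x‖ ≤ C) ∧
      (∀ ε > (0 : ℝ), ∃ T : ℝ, ∀ t ≥ T, ∀ x ∈ K,
        ‖f (t + (ω : ℝ)) x - f t x‖ ≤ ε))
    (hlip : ∀ t : ℝ, 0 ≤ t → ∀ x y : X, ‖f t x - f t y‖ ≤ L * ‖x - y‖)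
    (u : ℝ → X)
    (hbdd : ∃ C : ℝ, ∀ t : ℝ, 0 ≤ t → ‖u t‖ ≤ C)
    (hcont : ContinuousOn u (Set.Ici (0 : ℝ)))
    (hsap : Tendsto (fun t : ℝ => u (t + (ω : ℝ)) - u t) atTop (nhds 0)) :
    Tendsto (fun t : ℝ =>
        f (t + (ω : ℝ)) (u ((⌊t + (ω : ℝ)⌋ : ℤ) : ℝ)) - f t (u ((⌊t⌋ : ℤ) : ℝ)))
      atTop (nhds 0) := by
  obtain ⟨C, hC⟩ := hbdd
  have hCK : Bornology.IsBounded (Metric.closedBall (0:X) C) := Metric.isBounded_closedBall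
  rw [NormedAddCommGroup.tendsto_nhds_zero]
  intro ε hε
  obtain ⟨T, hT⟩ := (husap _ hCK).2 (ε/4) (by positivity)
  obtain ⟨T', hT'⟩ := Filter.eventually_atTop.mp
    (NormedAddCommGroup.tendsto_nhds_zero.mp hsap (ε/(4*L)) (by positivity))
  rw [eventually_atTop]
  refine ⟨max (max T (T'+1)) 1, fun t ht => ?_⟩
  have ht1 : (1:ℝ) ≤ t := le_trans (le_max_right _ _) ht
  have htT : T ≤ t := le_trans (le_trans (le_max_left _ _) (le_max_left _ _)) ht
  have htT' : T' + 1 ≤ t := le_trans (le_trans (le_max_right _ _) (le_max_left _ _)) ht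
  have hfl1 : t - 1 < ((⌊t⌋:ℤ):ℝ) := Int.sub_one_lt_floor t
  have hfl : T' ≤ ((⌊t⌋:ℤ):ℝ) := by linarith
  have hfl0 : (0:ℝ) ≤ ((⌊t⌋:ℤ):ℝ) := by linarith
  have hmem : u ((⌊t⌋:ℤ):ℝ) ∈ Metric.closedBall (0:X) C := by
    simpa [Metric.mem_closedBall, dist_zero_right] using hC _ hfl0
  have hfloor : ((⌊t + (ω:ℝ)⌋ : ℤ) : ℝ) = ((⌊t⌋:ℤ):ℝ) + ω := by
    rw [Int.floor_add_natCast]; push_cast; ring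
  rw [hfloor]
  have key : f (t+(ω:ℝ)) (u (((⌊t⌋:ℤ):ℝ)+ω)) - f t (u ((⌊t⌋:ℤ):ℝ))
      = (f (t+(ω:ℝ)) (u (((⌊t⌋:ℤ):ℝ)+ω)) - f (t+(ω:ℝ)) (u ((⌊t⌋:ℤ):ℝ)))
        + (f (t+(ω:ℝ)) (u ((⌊t⌋:ℤ):ℝ)) - f t (u ((⌊t⌋:ℤ):ℝ))) := by abel
  rw [key]
  have hω0 : (0:ℝ) ≤ (ω:ℝ) := Nat.cast_nonneg ω
  have h1 : ‖f (t+(ω:ℝ)) (u (((⌊t⌋:ℤ):ℝ)+ω)) - f (t+(ω:ℝ)) (u ((⌊t⌋:ℤ):ℝ))‖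
      ≤ L * ‖u (((⌊t⌋:ℤ):ℝ)+ω) - u ((⌊t⌋:ℤ):ℝ)‖ := hlip _ (by linarith) _ _
  have h2 : ‖u (((⌊t⌋:ℤ):ℝ)+ω) - u ((⌊t⌋:ℤ):ℝ)‖ < ε/(4*L) := hT' _ hfl
  have h3 : ‖f (t+(ω:ℝ)) (u ((⌊t⌋:ℤ):ℝ)) - f t (u ((⌊t⌋:ℤ):ℝ))‖ ≤ ε/4 := hT t htT _ hmem
  have hmul : L * ‖u (((⌊t⌋:ℤ):ℝ)+ω) - u ((⌊t⌋:ℤ):ℝ)‖ ≤ L * (ε/(4*L)) :=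
    mul_le_mul_of_nonneg_left h2.le hL.le
  have hLε : L * (ε/(4*L)) = ε/4 := by field_simp
  calc ‖_ + _‖ ≤ _ + _ := norm_add_le _ _
    _ ≤ ε/4 + ε/4 := by
        refine add_le_add (le_trans h1 ?_) h3
        rw [← hLε]; exact hmul
    _ < ε := by linarith
end

section
/- Let ω be a positive integer, f : ℝ≥0 × X → X continuous, uniformly S-asymptotically ω-periodic on bounded sets and globally Lipschitz in the second variable with constant L. If u : ℝ≥0 → X is bounded continuous S-asymptotically ω-periodic, then the function v(t) = f(t, u(⌊t⌋)) is S-asymptotically ω-periodic in the Stepanov sense with exponent p ≥ 1: lim_{t→∞} ∫_t^{t+1} ‖v(s+ω) - v(s)‖^p ds = 0. -/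
open Filter MeasureTheory

theorem stmt4 {X : Type*} [NormedAddCommGroup X] [NormedSpace ℝ X] [CompleteSpace X]
    (f : ℝ → X → X) (ω : ℕ) (hω : 1 ≤ ω) (L : ℝ) (hL : 0 < L) (p : ℝ) (hp : 1 ≤ p)
    (hfcont : Continuous (fun q : ℝ × X => f q.1 q.2))
    (husap : ∀ K : Set X, Bornology.IsBounded K →
      (∃ C : ℝ, ∀ t : ℝ, 0 ≤ t → ∀ x ∈ K, ‖f t x‖ ≤ C) ∧
      (∀ ε > (0 : ℝ), ∃ T : ℝ, ∀ t ≥ T, ∀ x ∈ K,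
        ‖f (t + (ω : ℝ)) x - f t x‖ ≤ ε))
    (hlip : ∀ t : ℝ, 0 ≤ t → ∀ x y : X, ‖f t x - f t y‖ ≤ L * ‖x - y‖)
    (u : ℝ → X)
    (hbdd : ∃ C : ℝ, ∀ t : ℝ, 0 ≤ t → ‖u t‖ ≤ C)
    (hcont : ContinuousOn u (Set.Ici (0 : ℝ)))
    (hsap : Tendsto (fun t : ℝ => u (t + (ω : ℝ)) - u t) atTop (nhds 0)) :
    Tendsto (fun t : ℝ =>
        ∫ s in t..(t + 1),
          ‖f (s + (ω : ℝ)) (u ((⌊s + (ω : ℝ)⌋ : ℤ) : ℝ)) - f s (u ((⌊s⌋ : ℤ) : ℝ))‖ ^ p)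
      atTop (nhds 0) := by
  obtain ⟨C, hC⟩ := hbdd
  have hKb : Bornology.IsBounded (Metric.closedBall (0 : X) C) := Metric.isBounded_closedBall
  obtain ⟨-, hfper⟩ := husap _ hKb
  have huK : ∀ t : ℝ, 0 ≤ t → u t ∈ Metric.closedBall (0 : X) C := fun t ht => by
    simpa [Metric.mem_closedBall, dist_eq_norm] using hC t ht
  have hfloor : ∀ s : ℝ, ((⌊s + (ω : ℝ)⌋ : ℤ) : ℝ) = ((⌊s⌋ : ℤ) : ℝ) + ω := fun s => by
    rw [Int.floor_add_natCast]; push_cast; ring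
  have hu2 : Tendsto (fun s : ℝ => u (((⌊s⌋ : ℤ) : ℝ) + (ω : ℝ)) - u ((⌊s⌋ : ℤ) : ℝ))
      atTop (nhds 0) :=
    hsap.comp (tendsto_intCast_atTop_atTop.comp tendsto_floor_atTop)
  have hDnorm : Tendsto (fun s : ℝ =>
      ‖f (s + (ω : ℝ)) (u ((⌊s + (ω : ℝ)⌋ : ℤ) : ℝ)) - f s (u ((⌊s⌋ : ℤ) : ℝ))‖)
      atTop (nhds 0) := by
    rw [Metric.tendsto_atTop]
    intro ε hε
    obtain ⟨T₁, hT₁⟩ := hfper (ε / 2) (by positivity)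
    rw [Metric.tendsto_atTop] at hu2
    obtain ⟨T₂, hT₂⟩ := hu2 (ε / (2 * L)) (by positivity)
    refine ⟨max (max T₁ T₂) 0, fun s hs => ?_⟩
    have hs0 : (0 : ℝ) ≤ s := le_trans (le_max_right _ _) hs
    have hsT₁ : T₁ ≤ s := le_trans (le_trans (le_max_left _ _) (le_max_left _ _)) hs
    have hsT₂ : T₂ ≤ s := le_trans (le_trans (le_max_right _ _) (le_max_left _ _)) hs
    have hfl0 : (0 : ℝ) ≤ ((⌊s⌋ : ℤ) : ℝ) := by
      exact_mod_cast Int.floor_nonneg.mpr hs0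
    rw [hfloor s]
    set a : X := u ((⌊s⌋ : ℤ) : ℝ) with ha
    set a' : X := u (((⌊s⌋ : ℤ) : ℝ) + (ω : ℝ)) with ha'
    have h1 : ‖f (s + (ω : ℝ)) a' - f (s + (ω : ℝ)) a‖ ≤ L * ‖a' - a‖ :=
      hlip (s + (ω : ℝ)) (by positivity) a' a
    have h2 : ‖a' - a‖ < ε / (2 * L) := by
      have := hT₂ s hsT₂
      simpa [dist_zero_right] using this
    have h3 : ‖f (s + (ω : ℝ)) a - f s a‖ ≤ ε / 2 :=
      hT₁ s hsT₁ a (huK _ hfl0)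
    have htri : ‖f (s + (ω : ℝ)) a' - f s a‖ ≤
        ‖f (s + (ω : ℝ)) a' - f (s + (ω : ℝ)) a‖ + ‖f (s + (ω : ℝ)) a - f s a‖ :=
      norm_sub_le_norm_sub_add_norm_sub _ _ _
    have h4 : L * ‖a' - a‖ < ε / 2 := by
      have := mul_lt_mul_of_pos_left h2 hL
      have heq : L * (ε / (2 * L)) = ε / 2 := by field_simp
      linarith
    have hfin : ‖f (s + (ω : ℝ)) a' - f s a‖ < ε := by linarith
    simpa [dist_zero_right, abs_of_nonneg (norm_nonneg _)] using hfin
  have hDp : Tendsto (fun s : ℝ =>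
      ‖f (s + (ω : ℝ)) (u ((⌊s + (ω : ℝ)⌋ : ℤ) : ℝ)) - f s (u ((⌊s⌋ : ℤ) : ℝ))‖ ^ p)
      atTop (nhds 0) := by
    have hc : ContinuousAt (fun x : ℝ => x ^ p) 0 :=
      Real.continuousAt_rpow_const 0 p (Or.inr (by linarith))
    have := (hc.tendsto).comp hDnorm
    simpa [Function.comp_def, Real.zero_rpow (by linarith : p ≠ 0)] using this
  rw [Metric.tendsto_atTop]
  intro ε hε
  rw [Metric.tendsto_atTop] at hDp
  obtain ⟨T, hT⟩ := hDp (ε / 2) (by positivity)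
  refine ⟨T, fun t ht => ?_⟩
  have hbound : ∀ s ∈ Set.uIoc t (t + 1),
      ‖‖f (s + (ω : ℝ)) (u ((⌊s + (ω : ℝ)⌋ : ℤ) : ℝ)) - f s (u ((⌊s⌋ : ℤ) : ℝ))‖ ^ p‖
        ≤ ε / 2 := by
    intro s hs
    rw [Set.uIoc_of_le (by linarith : t ≤ t + 1)] at hs
    have hsT : T ≤ s := le_of_lt (lt_of_le_of_lt ht hs.1)
    have := hT s hsT
    rw [Real.dist_eq, sub_zero] at this
    calc ‖_ ^ p‖ = |_ ^ p| := Real.norm_eq_abs _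
      _ ≤ ε / 2 := le_of_lt this
  have hnorm := intervalIntegral.norm_integral_le_of_norm_le_const hbound
  rw [Real.dist_eq, sub_zero, ← Real.norm_eq_abs]
  calc ‖_‖ ≤ ε / 2 * |t + 1 - t| := hnorm
    _ = ε / 2 := by simp
    _ < ε := by linarith
end

section
/- Let (U(t,s))_{t≥s≥0} be an exponentially stable evolutionary process on a Banach space X with ‖U(t,s)‖ ≤ M e^{-a(t-s)} for constants M > 0, a > 0, and let f ∈ BS^p(ℝ≥0, X) with p ≥ 1. Then the function u(t) = ∫_0^t U(t,s) f(s) ds is bounded, with ‖u(t)‖ ≤ M (2 - e^{-a})/(1 - e^{-a}) · ‖f‖_{S^p} for all t ≥ 0. -/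
open Filter MeasureTheory

theorem stmt6 {X : Type*} [NormedAddCommGroup X] [NormedSpace ℝ X] [CompleteSpace X]
    (U : ℝ → ℝ → X →L[ℝ] X) (M a : ℝ) (hM : 0 < M) (ha : 0 < a)
    (hid : ∀ t : ℝ, 0 ≤ t → U t t = ContinuousLinearMap.id ℝ X)
    (hcomp : ∀ t s r : ℝ, 0 ≤ r → r ≤ s → s ≤ t → (U t s).comp (U s r) = U t r)
    (hUcont : ∀ x : X, Continuous (fun q : ℝ × ℝ => U q.1 q.2 x))
    (hbound : ∀ t s : ℝ, 0 ≤ s → s ≤ t → ‖U t s‖ ≤ M * Real.exp (-a * (t - s)))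
    (p : ℝ) (hp : 1 ≤ p) (f : ℝ → X) (hmeas : MeasureTheory.StronglyMeasurable f)
    (hintU : ∀ t : ℝ, 0 ≤ t → IntervalIntegrable (fun s => U t s (f s)) volume 0 t)
    (hint : ∀ t : ℝ, 0 ≤ t → IntervalIntegrable (fun s => ‖f s‖ ^ p) volume t (t + 1))
    (Sp : ℝ) (hSp : ∀ t : ℝ, 0 ≤ t → (∫ s in t..(t + 1), ‖f s‖ ^ p) ^ (1 / p) ≤ Sp) :
    ∀ t : ℝ, 0 ≤ t →
      ‖∫ s in (0 : ℝ)..t, U t s (f s)‖ ≤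
        M * ((2 - Real.exp (-a)) / (1 - Real.exp (-a))) * Sp := by
  intro t ht
  have hq0 : (0:ℝ) < Real.exp (-a) := Real.exp_pos _
  have hq1 : Real.exp (-a) < 1 := Real.exp_lt_one_iff.mpr (by linarith)
  have hp0 : 0 < p := lt_of_lt_of_le zero_lt_one hp
  have hSp0 : 0 ≤ Sp := by
    refine le_trans ?_ (hSp 0 le_rfl)
    exact Real.rpow_nonneg (intervalIntegral.integral_nonneg (by norm_num)
      fun s _ => Real.rpow_nonneg (norm_nonneg _) p) _
  set C := M * ((2 - Real.exp (-a)) / (1 - Real.exp (-a))) * Sp with hC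
  have hC0 : 0 ≤ C := by
    apply mul_nonneg (mul_nonneg hM.le _) hSp0
    apply div_nonneg <;> linarith
  have hMSpC : M * Sp ≤ C * (1 - Real.exp (-a)) := by
    have hne : (1 - Real.exp (-a)) ≠ 0 := by linarith
    have e : C * (1 - Real.exp (-a)) = M * (2 - Real.exp (-a)) * Sp := by
      rw [hC]; field_simp
    rw [e]
    nlinarith [mul_nonneg (mul_nonneg hM.le hSp0) (show (0:ℝ) ≤ 1 - Real.exp (-a) by linarith)]
  -- integrability of ‖f‖ on unit intervals
  have hfint : ∀ c : ℝ, 0 ≤ c → IntervalIntegrable (fun s => ‖f s‖) volume c (c+1) := by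
    intro c hc
    have h1 : IntervalIntegrable (fun s => 1 + ‖f s‖ ^ p) volume c (c+1) :=
      intervalIntegrable_const.add (hint c hc)
    refine h1.mono_fun hmeas.norm.aestronglyMeasurable.restrict ?_
    refine Eventually.of_forall fun s => ?_
    have h2 : (0:ℝ) ≤ ‖f s‖ ^ p := Real.rpow_nonneg (norm_nonneg _) _
    have h3 : ‖f s‖ ≤ 1 + ‖f s‖ ^ p := by
      rcases le_total (‖f s‖) 1 with h | h
      · linarith
      · calc ‖f s‖ = ‖f s‖ ^ (1:ℝ) := (Real.rpow_one _).symm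
          _ ≤ ‖f s‖ ^ p := Real.rpow_le_rpow_of_exponent_le h hp
          _ ≤ 1 + ‖f s‖ ^ p := by linarith
    simp only [norm_norm, Real.norm_eq_abs]
    rw [abs_of_nonneg (show (0:ℝ) ≤ 1 + ‖f s‖ ^ p by linarith), abs_norm]
    exact h3
  -- Hölder's inequality on unit intervals
  have hHolder : ∀ c : ℝ, 0 ≤ c → (∫ s in c..(c+1), ‖f s‖) ≤ Sp := by
    intro c hc
    have hle : (c:ℝ) ≤ c+1 := by linarith
    refine le_trans ?_ (hSp c hc)
    rcases eq_or_lt_of_le hp with hp1 | hp1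
    · have : ∀ s : ℝ, ‖f s‖ ^ p = ‖f s‖ := by
        intro s; rw [← hp1, Real.rpow_one]
      simp only [this, ← hp1]
      norm_num
    · set μ := volume.restrict (Set.Ioc c (c+1)) with hμ
      have hμuniv : μ Set.univ = 1 := by
        rw [hμ, Measure.restrict_apply_univ, Real.volume_Ioc]
        norm_num
      haveI : IsProbabilityMeasure μ := ⟨hμuniv⟩
      have hconj := Real.HolderConjugate.conjExponent hp1
      have hintp : Integrable (fun s => ‖f s‖ ^ p) μ := by
        have := (hint c hc).1
        exact this
      have hfmem : MemLp f (ENNReal.ofReal p) μ := by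
        have hne : ENNReal.ofReal p ≠ 0 := by
          simp [ENNReal.ofReal_eq_zero]; linarith
        have hnetop : ENNReal.ofReal p ≠ ⊤ := ENNReal.ofReal_ne_top
        have h1 : MemLp (fun x => ‖f x‖ ^ (ENNReal.ofReal p).toReal)
            (ENNReal.ofReal p / ENNReal.ofReal p) μ := by
          rw [ENNReal.div_self hne hnetop, memLp_one_iff_integrable,
            ENNReal.toReal_ofReal hp0.le]
          exact hintp
        exact (memLp_norm_rpow_iff hmeas.aestronglyMeasurable.restrict hne hnetop).mp h1
      have hfmem' : MemLp (fun s => ‖f s‖) (ENNReal.ofReal p) μ := hfmem.norm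
      have key := integral_mul_le_Lp_mul_Lq_of_nonneg (μ := μ) hconj
        (f := fun s => ‖f s‖) (g := fun _ => (1:ℝ))
        (Eventually.of_forall fun _ => norm_nonneg _)
        (Eventually.of_forall fun _ => zero_le_one) hfmem'
        (memLp_const 1)
      simp only [mul_one, Real.one_rpow, integral_const, hμuniv, probReal_univ, ENNReal.toReal_one,
        one_smul, smul_eq_mul] at key
      rw [intervalIntegral.integral_of_le hle, intervalIntegral.integral_of_le hle]
      exact key
  -- weighted integrability helper
  have hw : ∀ (b u v : ℝ), IntervalIntegrable (fun s => ‖f s‖) volume u v →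
      IntervalIntegrable (fun s => M * Real.exp (-a*(b-s)) * ‖f s‖) volume u v := by
    intro b u v h
    exact h.continuousOn_mul (Continuous.continuousOn (by fun_prop))
  -- main induction
  have key : ∀ n : ℕ, ∀ r : ℝ, 0 ≤ r → r ≤ (n:ℝ) →
      IntervalIntegrable (fun s => ‖f s‖) volume 0 r ∧
      (∫ s in (0:ℝ)..r, M * Real.exp (-a*(r-s)) * ‖f s‖) ≤ C := by
    intro n
    induction n with
    | zero =>
      intro r hr0 hrn
      have hr : r = 0 := le_antisymm (by exact_mod_cast hrn) hr0
      subst hr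
      exact ⟨IntervalIntegrable.refl, by rw [intervalIntegral.integral_same]; exact hC0⟩
    | succ n ih =>
      intro r hr0 hrn
      by_cases hcase : r ≤ (n:ℝ)
      · exact ih r hr0 hcase
      push_neg at hcase
      by_cases hr1 : r ≤ 1
      · -- base case : r ∈ (0, 1]
        have hsub : Set.uIcc (0:ℝ) r ⊆ Set.uIcc (0:ℝ) (0+1) := by
          rw [Set.uIcc_of_le hr0, Set.uIcc_of_le (by norm_num)]
          exact Set.Icc_subset_Icc le_rfl (by linarith)
        have hi01 := hfint 0 le_rfl
        have hir : IntervalIntegrable (fun s => ‖f s‖) volume 0 r := hi01.mono_set hsub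
        refine ⟨hir, ?_⟩
        have step1 : (∫ s in (0:ℝ)..r, M * Real.exp (-a*(r-s)) * ‖f s‖)
            ≤ ∫ s in (0:ℝ)..r, M * ‖f s‖ := by
          refine intervalIntegral.integral_mono_on hr0 (hw r 0 r hir)
            (hir.const_mul M) ?_
          intro x hx
          have hxr : x ≤ r := hx.2
          have he : Real.exp (-a*(r-x)) ≤ 1 := Real.exp_le_one_iff.mpr (by nlinarith)
          nlinarith [mul_nonneg (mul_nonneg hM.le (norm_nonneg (f x))) (sub_nonneg.mpr he)]
        have step2 : (∫ s in (0:ℝ)..r, M * ‖f s‖) = M * ∫ s in (0:ℝ)..r, ‖f s‖ :=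
          intervalIntegral.integral_const_mul M _
        have step3 : (∫ s in (0:ℝ)..r, ‖f s‖) ≤ ∫ s in (0:ℝ)..(0+1), ‖f s‖ := by
          refine intervalIntegral.integral_mono_interval le_rfl hr0 (by linarith) ?_ hi01
          exact Eventually.of_forall fun s => norm_nonneg _
        have step4 := hHolder 0 le_rfl
        calc (∫ s in (0:ℝ)..r, M * Real.exp (-a*(r-s)) * ‖f s‖)
            ≤ M * ∫ s in (0:ℝ)..r, ‖f s‖ := by rw [← step2]; exact step1
          _ ≤ M * Sp := by
              refine mul_le_mul_of_nonneg_left (le_trans step3 ?_) hM.le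
              simpa using step4
          _ ≤ C := by nlinarith
      · push_neg at hr1
        obtain ⟨hipred, hgpred⟩ := ih (r-1) (by linarith) (by push_cast at hrn ⊢; linarith)
        have hilast : IntervalIntegrable (fun s => ‖f s‖) volume (r-1) r := by
          have := hfint (r-1) (by linarith)
          rwa [sub_add_cancel] at this
        have hiall : IntervalIntegrable (fun s => ‖f s‖) volume 0 r := hipred.trans hilast
        refine ⟨hiall, ?_⟩
        rw [← intervalIntegral.integral_add_adjacent_intervals
          (hw r 0 (r-1) hipred) (hw r (r-1) r hilast)]
        have part1 : (∫ s in (0:ℝ)..(r-1), M * Real.exp (-a*(r-s)) * ‖f s‖)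
            ≤ Real.exp (-a) * C := by
          have heq : (∫ s in (0:ℝ)..(r-1), M * Real.exp (-a*(r-s)) * ‖f s‖)
              = Real.exp (-a) * ∫ s in (0:ℝ)..(r-1), M * Real.exp (-a*((r-1)-s)) * ‖f s‖ := by
            have hexp : ∀ s : ℝ, Real.exp (-a*(r-s))
                = Real.exp (-a) * Real.exp (-a*((r-1)-s)) := by
              intro s; rw [← Real.exp_add]; congr 1; ring
            rw [← intervalIntegral.integral_const_mul]
            refine intervalIntegral.integral_congr fun s _ => ?_
            rw [hexp s]; ring
          rw [heq]
          exact mul_le_mul_of_nonneg_left hgpred hq0.le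
        have part2 : (∫ s in (r-1)..r, M * Real.exp (-a*(r-s)) * ‖f s‖) ≤ M * Sp := by
          have step1 : (∫ s in (r-1)..r, M * Real.exp (-a*(r-s)) * ‖f s‖)
              ≤ ∫ s in (r-1)..r, M * ‖f s‖ := by
            refine intervalIntegral.integral_mono_on (by linarith) (hw r (r-1) r hilast)
              (hilast.const_mul M) ?_
            intro x hx
            have hxr : x ≤ r := hx.2
            have he : Real.exp (-a*(r-x)) ≤ 1 := Real.exp_le_one_iff.mpr (by nlinarith)
            nlinarith [mul_nonneg (mul_nonneg hM.le (norm_nonneg (f x))) (sub_nonneg.mpr he)]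
          have step2 := hHolder (r-1) (by linarith)
          rw [sub_add_cancel] at step2
          calc (∫ s in (r-1)..r, M * Real.exp (-a*(r-s)) * ‖f s‖)
              ≤ ∫ s in (r-1)..r, M * ‖f s‖ := step1
            _ = M * ∫ s in (r-1)..r, ‖f s‖ := intervalIntegral.integral_const_mul M _
            _ ≤ M * Sp := mul_le_mul_of_nonneg_left step2 hM.le
        have : Real.exp (-a) * C + M * Sp ≤ C := by nlinarith
        linarith
  obtain ⟨hintF, hgC⟩ := key ⌈t⌉₊ t ht (Nat.le_ceil t)
  have hnorm : ‖∫ s in (0:ℝ)..t, U t s (f s)‖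
      ≤ |∫ s in (0:ℝ)..t, M * Real.exp (-a*(t-s)) * ‖f s‖| := by
    refine le_trans (intervalIntegral.norm_integral_le_of_norm_le ht ?_ (hw t 0 t hintF)) (le_abs_self _)
    refine Eventually.of_forall fun s hs => ?_
    calc ‖U t s (f s)‖ ≤ ‖U t s‖ * ‖f s‖ := (U t s).le_opNorm _
      _ ≤ M * Real.exp (-a * (t - s)) * ‖f s‖ :=
          mul_le_mul_of_nonneg_right (hbound t s hs.1.le hs.2) (norm_nonneg _)
  have habs : |∫ s in (0:ℝ)..t, M * Real.exp (-a*(t-s)) * ‖f s‖|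
      = ∫ s in (0:ℝ)..t, M * Real.exp (-a*(t-s)) * ‖f s‖ := by
    refine abs_of_nonneg (intervalIntegral.integral_nonneg ht fun s _ => ?_)
    positivity
  rw [habs] at hnorm
  exact le_trans hnorm hgC
end

section
/- The operator Γ defined on the space SAP_ω(ℝ≥0, X) of bounded continuous S-asymptotically ω-periodic functions by (Γφ)(t) = U(t,0)c₀ + ∫_0^t U(t,s) f(s, φ(⌊s⌋)) ds satisfies the contraction estimate ‖Γφ - Γψ‖_∞ ≤ (LM/a) ‖φ - ψ‖_∞ for all φ, ψ ∈ SAP_ω(ℝ≥0, X), where ‖U(t,s)‖ ≤ M e^{-a(t-s)} and f is L-Lipschitz in its second variable. -/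
open Filter MeasureTheory

theorem stmt10 {X : Type*} [NormedAddCommGroup X] [NormedSpace ℝ X] [CompleteSpace X]
    (U : ℝ → ℝ → X →L[ℝ] X) (M a L : ℝ) (ω : ℝ) (hω : 0 < ω)
    (hM : 0 < M) (ha : 0 < a) (hL : 0 < L)
    (hbound : ∀ t s : ℝ, 0 ≤ s → s ≤ t → ‖U t s‖ ≤ M * Real.exp (-a * (t - s)))
    (f : ℝ → X → X)
    (hlip : ∀ t : ℝ, 0 ≤ t → ∀ x y : X, ‖f t x - f t y‖ ≤ L * ‖x - y‖)
    (c₀ : X) (φ ψ : ℝ → X)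
    -- φ, ψ ∈ SAP_ω(ℝ≥0, X)
    (hφ : ContinuousOn φ (Set.Ici (0 : ℝ)) ∧ (∃ C : ℝ, ∀ t : ℝ, 0 ≤ t → ‖φ t‖ ≤ C) ∧
      Tendsto (fun t : ℝ => φ (t + ω) - φ t) atTop (nhds 0))
    (hψ : ContinuousOn ψ (Set.Ici (0 : ℝ)) ∧ (∃ C : ℝ, ∀ t : ℝ, 0 ≤ t → ‖ψ t‖ ≤ C) ∧
      Tendsto (fun t : ℝ => ψ (t + ω) - ψ t) atTop (nhds 0))
    (hintφ : ∀ t : ℝ, 0 ≤ t →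
      IntervalIntegrable (fun s => U t s (f s (φ ((⌊s⌋ : ℤ) : ℝ)))) volume 0 t)
    (hintψ : ∀ t : ℝ, 0 ≤ t →
      IntervalIntegrable (fun s => U t s (f s (ψ ((⌊s⌋ : ℤ) : ℝ)))) volume 0 t)
    (C : ℝ) (hC : ∀ s : ℝ, 0 ≤ s → ‖φ s - ψ s‖ ≤ C) :
    ∀ t : ℝ, 0 ≤ t →
      ‖(U t 0 c₀ + ∫ s in (0 : ℝ)..t, U t s (f s (φ ((⌊s⌋ : ℤ) : ℝ)))) -
          (U t 0 c₀ + ∫ s in (0 : ℝ)..t, U t s (f s (ψ ((⌊s⌋ : ℤ) : ℝ))))‖ ≤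
        L * M / a * C := by

  intro t ht
  have hC0 : 0 ≤ C := le_trans (norm_nonneg _) (hC 0 le_rfl)
  have hkey : ∀ s ∈ Set.uIcc (0:ℝ) t,
      ‖U t s (f s (φ ((⌊s⌋ : ℤ) : ℝ))) - U t s (f s (ψ ((⌊s⌋ : ℤ) : ℝ)))‖
        ≤ L * C * M * Real.exp (-a * (t - s)) := by
    intro s hs
    rw [Set.uIcc_of_le ht] at hs
    have hs0 : (0:ℝ) ≤ s := hs.1
    have hst : s ≤ t := hs.2
    have hfl : (0:ℝ) ≤ ((⌊s⌋ : ℤ) : ℝ) := by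
      exact_mod_cast Int.floor_nonneg.mpr hs0
    have h1 : ‖f s (φ ((⌊s⌋ : ℤ) : ℝ)) - f s (ψ ((⌊s⌋ : ℤ) : ℝ))‖ ≤ L * C := by
      calc ‖f s (φ ((⌊s⌋ : ℤ) : ℝ)) - f s (ψ ((⌊s⌋ : ℤ) : ℝ))‖
          ≤ L * ‖φ ((⌊s⌋ : ℤ) : ℝ) - ψ ((⌊s⌋ : ℤ) : ℝ)‖ := hlip s hs0 _ _
        _ ≤ L * C := by
            exact mul_le_mul_of_nonneg_left (hC _ hfl) hL.le
    calc ‖U t s (f s (φ ((⌊s⌋ : ℤ) : ℝ))) - U t s (f s (ψ ((⌊s⌋ : ℤ) : ℝ)))‖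
        = ‖U t s (f s (φ ((⌊s⌋ : ℤ) : ℝ)) - f s (ψ ((⌊s⌋ : ℤ) : ℝ)))‖ := by
          rw [map_sub]
      _ ≤ ‖U t s‖ * ‖f s (φ ((⌊s⌋ : ℤ) : ℝ)) - f s (ψ ((⌊s⌋ : ℤ) : ℝ))‖ :=
          (U t s).le_opNorm _
      _ ≤ (M * Real.exp (-a * (t - s))) * (L * C) := by
          apply mul_le_mul (hbound t s hs0 hst) h1 (norm_nonneg _)
          positivity
      _ = L * C * M * Real.exp (-a * (t - s)) := by ring
  have hintBound : IntervalIntegrable (fun s => L * C * M * Real.exp (-a * (t - s)))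
      volume 0 t := by
    apply Continuous.intervalIntegrable
    continuity
  have hnorm := intervalIntegral.norm_integral_le_of_norm_le
    (f := fun s => U t s (f s (φ ((⌊s⌋ : ℤ) : ℝ))) - U t s (f s (ψ ((⌊s⌋ : ℤ) : ℝ))))
    (g := fun s => L * C * M * Real.exp (-a * (t - s)))
    ht
    (by
      filter_upwards with s hs
      exact hkey s ((Set.Ioc_subset_Icc_self.trans Set.Icc_subset_uIcc) hs)) hintBound
  have hIeq : (∫ s in (0:ℝ)..t, L * C * M * Real.exp (-a * (t - s)))
      = L * C * M * ((1 - Real.exp (-a * t)) / a) := by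
    have : ∀ s : ℝ, Real.exp (-a * (t - s)) = Real.exp (a * s) * Real.exp (-a * t) := by
      intro s
      rw [← Real.exp_add]
      ring_nf
    simp_rw [this]
    rw [intervalIntegral.integral_const_mul]
    simp_rw [mul_comm (Real.exp (a * _)) (Real.exp (-a * t))]
    rw [intervalIntegral.integral_const_mul,
      intervalIntegral.integral_comp_mul_left (fun x => Real.exp x) ha.ne',
      integral_exp]
    simp only [mul_zero, Real.exp_zero, smul_eq_mul]
    field_simp
    ring_nf
    rw [mul_comm a t, Real.exp_neg]
    ring_nf
    rw [mul_assoc, mul_inv_cancel₀ (Real.exp_ne_zero _), mul_one]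
  calc ‖(U t 0 c₀ + ∫ s in (0:ℝ)..t, U t s (f s (φ ((⌊s⌋ : ℤ) : ℝ)))) -
        (U t 0 c₀ + ∫ s in (0:ℝ)..t, U t s (f s (ψ ((⌊s⌋ : ℤ) : ℝ))))‖
      = ‖∫ s in (0:ℝ)..t, (U t s (f s (φ ((⌊s⌋ : ℤ) : ℝ))) -
          U t s (f s (ψ ((⌊s⌋ : ℤ) : ℝ))))‖ := by
        rw [intervalIntegral.integral_sub (hintφ t ht) (hintψ t ht)]
        congr 1
        abel
    _ ≤ L * C * M * ((1 - Real.exp (-a * t)) / a) := by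
        refine hnorm.trans_eq ?_
        rw [show (∫ (t_1 : ℝ) in (0:ℝ)..t, (fun s => L * C * M * Real.exp (-a * (t - s))) t_1)
          = L * C * M * ((1 - Real.exp (-a * t)) / a) from hIeq]
    _ ≤ L * M / a * C := by
        have hexp : 0 ≤ Real.exp (-a * t) := (Real.exp_pos _).le
        have hle : (1 - Real.exp (-a * t)) / a ≤ 1 / a := by
          gcongr
          linarith
        calc L * C * M * ((1 - Real.exp (-a * t)) / a)
            ≤ L * C * M * (1 / a) := by
              apply mul_le_mul_of_nonneg_left hle
              positivity
          _ = L * M / a * C := by field_simp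
end

section
/- Let f : ℝ≥0 × X → X be uniformly S-asymptotically ω-periodic on bounded sets and globally Lipschitz with constant L in the second variable. If u : ℝ≥0 → X is bounded continuous S-asymptotically ω-periodic, then t ↦ f(t, u(t)) is bounded continuous S-asymptotically ω-periodic. -/
open Filter MeasureTheory

theorem stmt14 {X : Type*} [NormedAddCommGroup X] [NormedSpace ℝ X] [CompleteSpace X]
    (f : ℝ → X → X) (ω : ℝ) (hω : 0 < ω) (L : ℝ) (hL : 0 < L)
    (hfcont : Continuous (fun q : ℝ × X => f q.1 q.2))
    (husap : ∀ K : Set X, Bornology.IsBounded K →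
      (∃ C : ℝ, ∀ t : ℝ, 0 ≤ t → ∀ x ∈ K, ‖f t x‖ ≤ C) ∧
      (∀ ε > (0 : ℝ), ∃ T : ℝ, ∀ t ≥ T, ∀ x ∈ K, ‖f (t + ω) x - f t x‖ ≤ ε))
    (hlip : ∀ t : ℝ, 0 ≤ t → ∀ x y : X, ‖f t x - f t y‖ ≤ L * ‖x - y‖)
    (u : ℝ → X)
    (hbdd : ∃ C : ℝ, ∀ t : ℝ, 0 ≤ t → ‖u t‖ ≤ C)
    (hcont : ContinuousOn u (Set.Ici (0 : ℝ)))
    (hsap : Tendsto (fun t : ℝ => u (t + ω) - u t) atTop (nhds 0)) :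
    (∃ C : ℝ, ∀ t : ℝ, 0 ≤ t → ‖f t (u t)‖ ≤ C) ∧
    ContinuousOn (fun t : ℝ => f t (u t)) (Set.Ici (0 : ℝ)) ∧
    Tendsto (fun t : ℝ => f (t + ω) (u (t + ω)) - f t (u t)) atTop (nhds 0) := by
  obtain ⟨C, hC⟩ := hbdd
  set K : Set X := Metric.closedBall 0 C with hK
  have hKb : Bornology.IsBounded K := Metric.isBounded_closedBall
  obtain ⟨⟨M, hM⟩, hper⟩ := husap K hKb
  have huK : ∀ t : ℝ, 0 ≤ t → u t ∈ K := by
    intro t ht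
    simpa [hK, Metric.mem_closedBall, dist_eq_norm] using hC t ht
  refine ⟨⟨M, fun t ht => hM t ht _ (huK t ht)⟩, ?_, ?_⟩
  · exact hfcont.comp_continuousOn (continuousOn_id.prodMk hcont)
  · rw [NormedAddCommGroup.tendsto_nhds_zero]
    intro ε hε
    obtain ⟨T, hT⟩ := hper (ε/2) (by positivity)
    have h1 : ∀ᶠ t : ℝ in atTop, ‖u (t + ω) - u t‖ < ε / (2 * L) := by
      have := (NormedAddCommGroup.tendsto_nhds_zero.mp hsap) (ε / (2 * L)) (by positivity)
      exact this
    filter_upwards [h1, eventually_ge_atTop (max T 0)] with t h1t h2t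
    have ht0 : (0:ℝ) ≤ t := le_trans (le_max_right _ _) h2t
    have htω : (0:ℝ) ≤ t + ω := by linarith
    have key : f (t + ω) (u (t + ω)) - f t (u t) =
        (f (t + ω) (u (t + ω)) - f (t + ω) (u t)) + (f (t + ω) (u t) - f t (u t)) := by
      abel
    rw [key]
    calc ‖(f (t + ω) (u (t + ω)) - f (t + ω) (u t)) + (f (t + ω) (u t) - f t (u t))‖
        ≤ ‖f (t + ω) (u (t + ω)) - f (t + ω) (u t)‖ + ‖f (t + ω) (u t) - f t (u t)‖ :=
          norm_add_le _ _
      _ < ε := by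
          have ha : ‖f (t + ω) (u (t + ω)) - f (t + ω) (u t)‖ ≤ L * ‖u (t + ω) - u t‖ :=
            hlip (t + ω) htω _ _
          have hb : ‖f (t + ω) (u t) - f t (u t)‖ ≤ ε / 2 :=
            hT t (le_trans (le_max_left _ _) h2t) _ (huK t ht0)
          have : L * ‖u (t + ω) - u t‖ < ε / 2 := by
            have := mul_lt_mul_of_pos_left h1t hL
            calc L * ‖u (t + ω) - u t‖ < L * (ε / (2 * L)) := this
              _ = ε / 2 := by field_simp
          linarith
end

section
/- Let (U(t,s))_{t≥s≥0} satisfy ‖U(t,s)‖ ≤ M e^{-a(t-s)} with M, a > 0, and let g ∈ BS^p(ℝ≥0, ℝ≥0) for p ≥ 1. Then for any t ∈ [n, n+1] with n ∈ ℕ: ∫_0^t e^{-a(t-s)} g(s) ds ≤ (Σ_{k=0}^{n-1} e^{-a(n-k-1)} (∫_k^{k+1} g(s)^p ds)^{1/p}) + (∫_n^{n+1} g(s)^p ds)^{1/p} ≤ ((2-e^{-a})/(1-e^{-a})) ‖g‖_{S^p}. -/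
open Filter MeasureTheory

lemma holder_unit {p : ℝ} (hp : 1 ≤ p) {g : ℝ → ℝ} (hg0 : ∀ s, 0 ≤ g s)
    (hgm : Measurable g) {c : ℝ}
    (hgi : IntervalIntegrable g volume c (c+1))
    (hgpi : IntervalIntegrable (fun s => g s ^ p) volume c (c+1)) :
    (∫ s in c..c+1, g s) ≤ (∫ s in c..c+1, g s ^ p) ^ (1/p) := by
  rcases eq_or_lt_of_le hp with hp1 | hp1
  · subst hp1; simp
  have hc1 : c ≤ c + 1 := by linarith
  set μ := volume.restrict (Set.Ioc c (c+1)) with hμ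
  have hμuniv : μ Set.univ = 1 := by
    simp [hμ, Real.volume_Ioc]
  haveI : IsProbabilityMeasure μ := ⟨hμuniv⟩
  have hq := Real.HolderConjugate.conjExponent hp1
  set q := Real.conjExponent p with hqdef
  have hp0 : (0:ℝ) < p := by linarith
  have hIg : Integrable g μ := (intervalIntegrable_iff_integrableOn_Ioc_of_le hc1).1 hgi
  have hIgp : Integrable (fun s => g s ^ p) μ :=
    (intervalIntegrable_iff_integrableOn_Ioc_of_le hc1).1 hgpi
  have hofp0 : ENNReal.ofReal p ≠ 0 := by simp [ENNReal.ofReal_eq_zero]; linarith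
  have hofpt : ENNReal.ofReal p ≠ ⊤ := ENNReal.ofReal_ne_top
  have hMg : MemLp g (ENNReal.ofReal p) μ := by
    refine (memLp_norm_rpow_iff (q := ENNReal.ofReal p) hgm.aestronglyMeasurable hofp0 hofpt).1 ?_
    have : ENNReal.ofReal p / ENNReal.ofReal p = 1 := ENNReal.div_self hofp0 hofpt
    rw [this, memLp_one_iff_integrable]
    have : (fun x : ℝ => ‖g x‖ ^ (ENNReal.ofReal p).toReal) = fun s => g s ^ p := by
      funext x
      rw [Real.norm_of_nonneg (hg0 x), ENNReal.toReal_ofReal hp0.le]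
    rw [this]; exact hIgp
  have hM1 : MemLp (fun _ : ℝ => (1:ℝ)) (ENNReal.ofReal q) μ := memLp_const 1
  have key := integral_mul_le_Lp_mul_Lq_of_nonneg (μ := μ) hq
    (Filter.Eventually.of_forall hg0) (Filter.Eventually.of_forall fun _ => zero_le_one)
    hMg hM1
  simp only [mul_one, Real.one_rpow] at key
  have h1 : ∫ _ : ℝ, (1:ℝ) ∂μ = 1 := by simp [hμuniv]
  rw [h1, Real.one_rpow, mul_one] at key
  rw [intervalIntegral.integral_of_le hc1, intervalIntegral.integral_of_le hc1]
  exact key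

theorem stmt19 {X : Type*} [NormedAddCommGroup X] [NormedSpace ℝ X] [CompleteSpace X]
    (U : ℝ → ℝ → X →L[ℝ] X) (M a : ℝ) (hM : 0 < M) (ha : 0 < a)
    (hbound : ∀ t s : ℝ, 0 ≤ s → s ≤ t → ‖U t s‖ ≤ M * Real.exp (-a * (t - s)))
    (p : ℝ) (hp : 1 ≤ p) (g : ℝ → ℝ) (hg0 : ∀ s : ℝ, 0 ≤ g s)
    (hgmeas : Measurable g)
    (hgint : ∀ t : ℝ, 0 ≤ t → IntervalIntegrable g volume 0 t)
    (hgpint : ∀ t : ℝ, 0 ≤ t → IntervalIntegrable (fun s => g s ^ p) volume t (t + 1))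
    (Sg : ℝ) (hSg : ∀ t : ℝ, 0 ≤ t → (∫ s in t..(t + 1), g s ^ p) ^ (1 / p) ≤ Sg) :
    ∀ n : ℕ, ∀ t : ℝ, (n : ℝ) ≤ t → t ≤ (n : ℝ) + 1 →
      (∫ s in (0 : ℝ)..t, Real.exp (-a * (t - s)) * g s) ≤
        ((∑ k ∈ Finset.range n,
            Real.exp (-a * ((n : ℝ) - (k : ℝ) - 1)) *
              (∫ s in (k : ℝ)..((k : ℝ) + 1), g s ^ p) ^ (1 / p)) +
          (∫ s in (n : ℝ)..((n : ℝ) + 1), g s ^ p) ^ (1 / p)) ∧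
      ((∑ k ∈ Finset.range n,
            Real.exp (-a * ((n : ℝ) - (k : ℝ) - 1)) *
              (∫ s in (k : ℝ)..((k : ℝ) + 1), g s ^ p) ^ (1 / p)) +
          (∫ s in (n : ℝ)..((n : ℝ) + 1), g s ^ p) ^ (1 / p)) ≤
        (2 - Real.exp (-a)) / (1 - Real.exp (-a)) * Sg := by
  intro n t hnt htn1
  set f : ℝ → ℝ := fun s => Real.exp (-a * (t - s)) * g s with hf
  -- integrability helpers
  have hgI : ∀ u v : ℝ, 0 ≤ u → u ≤ v → v ≤ (n:ℝ)+1 → IntervalIntegrable g volume u v := by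
    intro u v hu huv hv
    refine (hgint ((n:ℝ)+1) (by positivity)).mono_set ?_
    rw [Set.uIcc_of_le huv, Set.uIcc_of_le (by positivity)]
    exact Set.Icc_subset_Icc hu hv
  have hcont : Continuous fun s : ℝ => Real.exp (-a * (t - s)) :=
    Real.continuous_exp.comp (continuous_const.mul (continuous_const.sub continuous_id))
  have hfI : ∀ u v : ℝ, 0 ≤ u → u ≤ v → v ≤ (n:ℝ)+1 → IntervalIntegrable f volume u v :=
    fun u v hu huv hv => (hgI u v hu huv hv).continuousOn_mul hcont.continuousOn
  -- split the integral
  have hint : ∀ k < n, IntervalIntegrable f volume ((k:ℕ):ℝ) (((k+1:ℕ)):ℝ) := by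
    intro k hk
    refine hfI _ _ (Nat.cast_nonneg _) (by push_cast; linarith) ?_
    push_cast
    have : (k:ℝ) + 1 ≤ (n:ℝ) := by exact_mod_cast Nat.succ_le_of_lt hk
    linarith
  have hsum := intervalIntegral.sum_integral_adjacent_intervals (μ := volume) (f := f)
    (a := fun k : ℕ => (k:ℝ)) (n := n) hint
  push_cast at hsum
  have hsplit : (∫ s in (0:ℝ)..(n:ℝ), f s) + ∫ s in (n:ℝ)..t, f s = ∫ s in (0:ℝ)..t, f s :=
    intervalIntegral.integral_add_adjacent_intervals
      (hfI 0 n le_rfl (Nat.cast_nonneg n) (by linarith))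
      (hfI n t (Nat.cast_nonneg n) hnt htn1)
  -- per-interval bounds
  have hterm : ∀ k ∈ Finset.range n,
      (∫ s in (k:ℝ)..((k:ℝ)+1), f s) ≤
        Real.exp (-a * ((n : ℝ) - (k : ℝ) - 1)) *
          (∫ s in (k : ℝ)..((k : ℝ) + 1), g s ^ p) ^ (1 / p) := by
    intro k hk
    have hk' : (k:ℝ) + 1 ≤ (n:ℝ) := by
      exact_mod_cast Nat.succ_le_of_lt (Finset.mem_range.1 hk)
    have hgik : IntervalIntegrable g volume (k:ℝ) ((k:ℝ)+1) :=
      hgI _ _ (Nat.cast_nonneg k) (by linarith) (by linarith)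
    have step1 : (∫ s in (k:ℝ)..((k:ℝ)+1), f s) ≤
        ∫ s in (k:ℝ)..((k:ℝ)+1), Real.exp (-a * ((n : ℝ) - (k : ℝ) - 1)) * g s := by
      refine intervalIntegral.integral_mono_on (by linarith)
        (hfI _ _ (Nat.cast_nonneg k) (by linarith) (by linarith))
        (hgik.const_mul _) ?_
      intro s hs
      have hs2 : s ≤ (k:ℝ) + 1 := hs.2
      have hexp : Real.exp (-a * (t - s)) ≤ Real.exp (-a * ((n : ℝ) - (k : ℝ) - 1)) := by
        apply Real.exp_le_exp.mpr
        nlinarith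
      exact mul_le_mul_of_nonneg_right hexp (hg0 s)
    rw [intervalIntegral.integral_const_mul] at step1
    refine step1.trans (mul_le_mul_of_nonneg_left ?_ (Real.exp_nonneg _))
    exact holder_unit hp hg0 hgmeas hgik (hgpint (k:ℝ) (Nat.cast_nonneg k))
  have hlast : (∫ s in (n:ℝ)..t, f s) ≤
      (∫ s in (n : ℝ)..((n : ℝ) + 1), g s ^ p) ^ (1 / p) := by
    have hgin : IntervalIntegrable g volume (n:ℝ) ((n:ℝ)+1) :=
      hgI _ _ (Nat.cast_nonneg n) (by linarith) le_rfl
    have step1 : (∫ s in (n:ℝ)..t, f s) ≤ ∫ s in (n:ℝ)..t, g s := by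
      refine intervalIntegral.integral_mono_on hnt
        (hfI n t (Nat.cast_nonneg n) hnt htn1)
        (hgI n t (Nat.cast_nonneg n) hnt (by linarith)) ?_
      intro s hs
      have hexp : Real.exp (-a * (t - s)) ≤ 1 := by
        rw [← Real.exp_zero]
        apply Real.exp_le_exp.mpr
        nlinarith [hs.2]
      calc f s ≤ 1 * g s := mul_le_mul_of_nonneg_right hexp (hg0 s)
      _ = g s := one_mul _
    have step2 : (∫ s in (n:ℝ)..t, g s) ≤ ∫ s in (n:ℝ)..((n:ℝ)+1), g s :=
      intervalIntegral.integral_mono_interval le_rfl hnt htn1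
        (Filter.Eventually.of_forall hg0) hgin
    exact (step1.trans step2).trans
      (holder_unit hp hg0 hgmeas hgin (hgpint (n:ℝ) (Nat.cast_nonneg n)))
  constructor
  · calc (∫ s in (0:ℝ)..t, f s)
        = (∑ k ∈ Finset.range n, ∫ s in (k:ℝ)..((k:ℝ)+1), f s) + ∫ s in (n:ℝ)..t, f s := by
          rw [hsum, hsplit]
      _ ≤ _ := add_le_add (Finset.sum_le_sum hterm) hlast
  · -- second inequality
    set r := Real.exp (-a) with hr
    have hr0 : 0 < r := Real.exp_pos _
    have hr1 : r < 1 := by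
      rw [hr, ← Real.exp_zero]
      exact Real.exp_lt_exp.mpr (by linarith)
    have h1r : 0 < 1 - r := by linarith
    have hSg0 : 0 ≤ Sg := by
      refine le_trans ?_ (hSg 0 le_rfl)
      exact Real.rpow_nonneg (intervalIntegral.integral_nonneg (by linarith)
        (fun s _ => Real.rpow_nonneg (hg0 s) p)) _
    have hgeom : (∑ k ∈ Finset.range n, Real.exp (-a * ((n : ℝ) - (k : ℝ) - 1))) ≤ 1 / (1 - r) := by
      have hre : ∀ k ∈ Finset.range n,
          Real.exp (-a * ((n : ℝ) - (k : ℝ) - 1)) = r ^ (n - 1 - k) := by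
        intro k hk
        have hkn : k < n := Finset.mem_range.1 hk
        have hcast : ((n - 1 - k : ℕ) : ℝ) = (n:ℝ) - (k:ℝ) - 1 := by
          rw [Nat.sub_sub, Nat.cast_sub (by omega)]
          push_cast; ring
        rw [hr, ← Real.exp_nat_mul, hcast]
        ring_nf
      rw [Finset.sum_congr rfl hre, Finset.sum_range_reflect (fun j => r ^ j) n]
      have : (∑ j ∈ Finset.range n, r ^ j) = (1 - r ^ n) / (1 - r) := by
        rw [geom_sum_eq (ne_of_lt hr1)]
        rw [← neg_div_neg_eq]; ring_nf
      rw [this]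
      have hle : 1 - r ^ n ≤ 1 := by nlinarith [pow_nonneg hr0.le n]
      exact (div_le_div_iff_of_pos_right h1r).mpr hle
    have step1 : (∑ k ∈ Finset.range n,
          Real.exp (-a * ((n : ℝ) - (k : ℝ) - 1)) *
            (∫ s in (k : ℝ)..((k : ℝ) + 1), g s ^ p) ^ (1 / p)) +
        (∫ s in (n : ℝ)..((n : ℝ) + 1), g s ^ p) ^ (1 / p) ≤
        (∑ k ∈ Finset.range n, Real.exp (-a * ((n : ℝ) - (k : ℝ) - 1))) * Sg + Sg := by
      refine add_le_add ?_ (hSg (n:ℝ) (Nat.cast_nonneg n))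
      rw [Finset.sum_mul]
      refine Finset.sum_le_sum fun k hk => ?_
      exact mul_le_mul_of_nonneg_left (hSg (k:ℝ) (Nat.cast_nonneg k)) (Real.exp_nonneg _)
    refine step1.trans ?_
    have step2 : (∑ k ∈ Finset.range n, Real.exp (-a * ((n : ℝ) - (k : ℝ) - 1))) * Sg + Sg ≤
        (1 / (1 - r)) * Sg + Sg := by
      exact add_le_add (mul_le_mul_of_nonneg_right hgeom hSg0) le_rfl
    refine step2.trans ?_
    have : (1 / (1 - r)) * Sg + Sg = (2 - r) / (1 - r) * Sg := by
      field_simp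
      ring
    rw [this]
end
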